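/- arXiv:2305.17292 — 4 statements merged into one kernel-verified Lean document; each statement's English description precedes it below -/
import Mathlib

section
/- In the group $G = \langle a, x \mid x^n = a^{-1} x^n a \rangle$ (with $n \geq 1$), the cyclic subgroup $H = \langle x^n \rangle$ is central, hence normal, and the quotient $G/H$ is isomorphic to the free product $\mathbb{Z} * C_n$, where $C_n$ is the cyclic group of order $n$. -/
/-- The relation set for the group `G = ⟨a, x ∣ x^n = a⁻¹ x^n a⟩`,
with `true ↦ a`, `false ↦ x`. -/
def auxRel (n : ℕ) : Set (FreeGroup Bool) :=
  {(FreeGroup.of false) ^ n *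
    ((FreeGroup.of true)⁻¹ * (FreeGroup.of false) ^ n * FreeGroup.of true)⁻¹}

/-- The defining relation holds in the presented group: `a * x^n = x^n * a`. -/
lemma auxRel_comm (n : ℕ) :
    (PresentedGroup.of true : PresentedGroup (auxRel n)) * (PresentedGroup.of false) ^ n
      = (PresentedGroup.of false) ^ n * PresentedGroup.of true := by
  have h : (PresentedGroup.mk (auxRel n)) ((FreeGroup.of false) ^ n *
      ((FreeGroup.of true)⁻¹ * (FreeGroup.of false) ^ n * FreeGroup.of true)⁻¹) = 1 := by
    apply (QuotientGroup.eq_one_iff _).2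
    exact Subgroup.subset_normalClosure rfl
  simp only [map_mul, map_pow, map_inv] at h
  have h' : (PresentedGroup.mk (auxRel n) (FreeGroup.of false)) ^ n
      = (PresentedGroup.mk (auxRel n) (FreeGroup.of true))⁻¹ *
        (PresentedGroup.mk (auxRel n) (FreeGroup.of false)) ^ n *
        (PresentedGroup.mk (auxRel n) (FreeGroup.of true)) := by
    have := mul_eq_one_iff_eq_inv.mp h
    simpa using this
  show (PresentedGroup.mk (auxRel n) (FreeGroup.of true)) *
      (PresentedGroup.mk (auxRel n) (FreeGroup.of false)) ^ n
    = (PresentedGroup.mk (auxRel n) (FreeGroup.of false)) ^ n *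
      (PresentedGroup.mk (auxRel n) (FreeGroup.of true))
  conv_lhs => rw [h']
  group

/-- `x^n` is central. -/
lemma auxRel_central (n : ℕ) :
    ((PresentedGroup.of false : PresentedGroup (auxRel n)) ^ n)
      ∈ Subgroup.center (PresentedGroup (auxRel n)) := by
  rw [Subgroup.mem_center_iff]
  intro g
  have : g ∈ Subgroup.centralizer
      {((PresentedGroup.of false : PresentedGroup (auxRel n)) ^ n)} := by
    refine PresentedGroup.generated_by (auxRel n) _ (fun j => ?_) g
    rw [Subgroup.mem_centralizer_singleton_iff]
    cases j with
    | false =>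
      exact ((Commute.refl (PresentedGroup.of false : PresentedGroup (auxRel n))).pow_right n).eq
    | true => exact auxRel_comm n
  exact Subgroup.mem_centralizer_singleton_iff.mp this

/-- In `G = ⟨a, x ∣ x^n = a⁻¹ x^n a⟩` the cyclic subgroup `H = ⟨x^n⟩` is central
(hence normal), and `G/H ≅ ℤ * C_n`: there is a surjective homomorphism from `G`
onto the free product `ℤ * C_n` with kernel exactly `H`. -/
theorem aux_central_quotient (n : ℕ) (hn : 1 ≤ n) :
    (Subgroup.zpowers ((PresentedGroup.of false : PresentedGroup (auxRel n)) ^ n)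
        ≤ Subgroup.center (PresentedGroup (auxRel n))) ∧
    (Subgroup.zpowers ((PresentedGroup.of false : PresentedGroup (auxRel n)) ^ n)).Normal ∧
    ∃ π : PresentedGroup (auxRel n) →*
        Monoid.Coprod (Multiplicative ℤ) (Multiplicative (ZMod n)),
      Function.Surjective π ∧
      π.ker = Subgroup.zpowers ((PresentedGroup.of false : PresentedGroup (auxRel n)) ^ n) := by
  haveI : NeZero n := ⟨by omega⟩
  set x : PresentedGroup (auxRel n) := PresentedGroup.of false with hx
  set a : PresentedGroup (auxRel n) := PresentedGroup.of true with ha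
  set H : Subgroup (PresentedGroup (auxRel n)) := Subgroup.zpowers (x ^ n) with hH
  have hle : H ≤ Subgroup.center (PresentedGroup (auxRel n)) :=
    (Subgroup.zpowers_le).2 (auxRel_central n)
  have hnormal : H.Normal := by
    constructor
    intro h hm g
    have hc := (Subgroup.mem_center_iff.mp (hle hm)) g
    have : g * h * g⁻¹ = h := by rw [hc, mul_inv_cancel_right]
    rwa [this]
  refine ⟨hle, hnormal, ?_⟩
  -- construct π
  set f : Bool → Monoid.Coprod (Multiplicative ℤ) (Multiplicative (ZMod n)) :=
    fun b => cond b (Monoid.Coprod.inl (Multiplicative.ofAdd (1 : ℤ)))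
      (Monoid.Coprod.inr (Multiplicative.ofAdd (1 : ZMod n))) with hf
  have hinrn : (Monoid.Coprod.inr (Multiplicative.ofAdd (1 : ZMod n)) :
      Monoid.Coprod (Multiplicative ℤ) (Multiplicative (ZMod n))) ^ n = 1 := by
    rw [← map_pow]
    have : (Multiplicative.ofAdd (1 : ZMod n)) ^ n = 1 := by
      rw [← ofAdd_nsmul]
      simp
    rw [this, map_one]
  have hrel : ∀ r ∈ auxRel n, FreeGroup.lift f r = 1 := by
    intro r hr
    rw [auxRel, Set.mem_singleton_iff] at hr
    subst hr
    simp only [map_mul, map_pow, map_inv, FreeGroup.lift_apply_of, hf, cond_true, cond_false]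
    rw [hinrn]
    group
  refine ⟨PresentedGroup.toGroup hrel, ?_, ?_⟩
  · -- surjectivity
    intro y
    induction y using Monoid.Coprod.induction_on with
    | inl m =>
      refine ⟨(PresentedGroup.of true) ^ (Multiplicative.toAdd m), ?_⟩
      rw [map_zpow, PresentedGroup.toGroup.of]
      simp only [hf, cond_true]
      rw [← map_zpow, ← ofAdd_zsmul, smul_eq_mul, mul_one, ofAdd_toAdd]
    | inr m =>
      refine ⟨(PresentedGroup.of false) ^ ((Multiplicative.toAdd m).val), ?_⟩
      rw [map_pow, PresentedGroup.toGroup.of]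
      simp only [hf, cond_false]
      rw [← map_pow, ← ofAdd_nsmul, nsmul_eq_mul, mul_one,
        ZMod.natCast_rightInverse (Multiplicative.toAdd m), ofAdd_toAdd]
    | mul u v hu hv =>
      obtain ⟨gu, rfl⟩ := hu
      obtain ⟨gv, rfl⟩ := hv
      exact ⟨gu * gv, map_mul _ _ _⟩
  · -- kernel
    set π := PresentedGroup.toGroup hrel with hπ
    set mkQ := QuotientGroup.mk' H with hmkQ
    have hxn1 : mkQ (x ^ n) = 1 := by
      rw [QuotientGroup.mk'_apply, QuotientGroup.eq_one_iff]
      exact Subgroup.mem_zpowers _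
    set ψ₁ := zpowersHom (PresentedGroup (auxRel n) ⧸ H) (mkQ a) with hψ₁
    have h0 : (zmultiplesHom (Additive (PresentedGroup (auxRel n) ⧸ H))
        (Additive.ofMul (mkQ x))) (n : ℤ) = 0 := by
      rw [zmultiplesHom_apply]
      have h1 : ((n : ℤ) • Additive.ofMul (mkQ x)) = Additive.ofMul ((mkQ x) ^ (n : ℤ)) := rfl
      rw [h1, zpow_natCast, ← map_pow, hxn1]
      rfl
    set ψ₂ := AddMonoidHom.toMultiplicativeLeft
      (ZMod.lift n ⟨zmultiplesHom (Additive (PresentedGroup (auxRel n) ⧸ H))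
        (Additive.ofMul (mkQ x)), h0⟩) with hψ₂
    set ψ := Monoid.Coprod.lift ψ₁ ψ₂ with hψ
    have hcomp : ψ.comp π = mkQ := by
      apply PresentedGroup.ext
      intro b
      cases b with
      | true =>
        rw [MonoidHom.comp_apply, hπ, PresentedGroup.toGroup.of]
        simp only [hf, cond_true, hψ, Monoid.Coprod.lift_apply_inl, hψ₁, zpowersHom_apply]
        simp
        rfl
      | false =>
        rw [MonoidHom.comp_apply, hπ, PresentedGroup.toGroup.of]
        simp only [hf, cond_false, hψ, Monoid.Coprod.lift_apply_inr, hψ₂,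
          AddMonoidHom.coe_toMultiplicativeLeft, Function.comp_apply, toAdd_ofAdd]
        rw [show (1 : ZMod n) = ((1 : ℤ) : ZMod n) by simp, ZMod.lift_coe,
          zmultiplesHom_apply, one_zsmul]
        rfl
    apply le_antisymm
    · intro g hg
      have hg1 : mkQ g = 1 := by
        rw [← DFunLike.congr_fun hcomp g, MonoidHom.comp_apply,
          MonoidHom.mem_ker.mp hg, map_one]
      rwa [QuotientGroup.mk'_apply, QuotientGroup.eq_one_iff] at hg1
    · rw [Subgroup.zpowers_le, MonoidHom.mem_ker, map_pow, PresentedGroup.toGroup.of]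
      simpa [hf] using hinrn
end

section
/- The even dihedral Artin group $D_{2n} = \langle a, b \mid (ab)^n = (ba)^n \rangle$ contains a normal subgroup $N$ of index $n$ that is isomorphic to $\mathbb{F}_n \times \mathbb{Z}$, namely $N = \langle (ab)^n, a, (ab)a(ab)^{-1}, \dots, (ab)^{n-1} a (ab)^{-(n-1)} \rangle$, and $D_{2n}/N \cong C_n$. -/
/-- The relation set for the even dihedral Artin group
`D_{2n} = ⟨a, b ∣ (ab)^n = (ba)^n⟩`, with `true ↦ a`, `false ↦ b`. -/
def dihedralRel (n : ℕ) : Set (FreeGroup Bool) :=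
  {(FreeGroup.of true * FreeGroup.of false) ^ n *
    ((FreeGroup.of false * FreeGroup.of true) ^ n)⁻¹}

abbrev DihedralArtin (n : ℕ) := PresentedGroup (dihedralRel n)

namespace DA

open SemidirectProduct

variable (n : ℕ)

abbrev F (n : ℕ) := FreeGroup (ZMod n)

def σ : MulAut (F n) := FreeGroup.freeGroupCongr (Equiv.addRight (1 : ZMod n))

lemma σ_pow_of (k : ℕ) (i : ZMod n) : (σ n ^ k) (FreeGroup.of i) = FreeGroup.of (i + k) := by
  induction k generalizing i with
  | zero => simp
  | succ k ih =>
    rw [pow_succ, MulAut.mul_apply]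
    show (σ n ^ k) (FreeGroup.of (i + 1)) = _
    rw [ih]
    push_cast
    ring_nf

lemma σ_zpow_of (k : ℤ) (i : ZMod n) : (σ n ^ k) (FreeGroup.of i) = FreeGroup.of (i + k) := by
  rcases k with m | m
  · simpa using σ_pow_of n m i
  · rw [Int.negSucc_eq, zpow_neg]
    rw [show ((σ n ^ ((m:ℤ)+1))⁻¹ : MulAut (F n)) = (σ n ^ ((m:ℤ)+1) : MulAut (F n)).symm from rfl,
      MulEquiv.symm_apply_eq]
    rw [show ((m:ℤ)+1) = ((m+1 : ℕ) : ℤ) by push_cast; ring, zpow_natCast, σ_pow_of]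
    congr 1
    push_cast
    ring

def φ : Multiplicative ℤ →* MulAut (F n) := zpowersHom _ (σ n)

abbrev Gr (n : ℕ) := SemidirectProduct (F n) (Multiplicative ℤ) (φ n)

def A : Gr n := inl (FreeGroup.of 0)
def Xg : Gr n := inr (Multiplicative.ofAdd 1)

lemma φ_apply (k : ℤ) : φ n (Multiplicative.ofAdd k) = σ n ^ k := by
  simp [φ, zpowersHom_apply]

lemma Xg_zpow (k : ℤ) : Xg n ^ k = inr (Multiplicative.ofAdd k) := by
  rw [Xg, ← map_zpow]
  congr 1
  rw [← ofAdd_zsmul]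
  simp

lemma Xg_pow (k : ℕ) : Xg n ^ k = inr (Multiplicative.ofAdd (k:ℤ)) := by
  rw [← zpow_natCast, Xg_zpow]

lemma inr_mul_inl (t : Multiplicative ℤ) (m : F n) :
    (inr t : Gr n) * inl m = inl (φ n t m) * inr t := by
  rw [inl_aut]
  simp [mul_assoc, ← map_mul]

-- elements of D
def a : DihedralArtin n := PresentedGroup.of true
def b : DihedralArtin n := PresentedGroup.of false
def X : DihedralArtin n := a n * b n

lemma rel : (X n) ^ n = (b n * a n) ^ n := by
  have h : ((FreeGroup.of true * FreeGroup.of false) ^ n *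
      ((FreeGroup.of false * FreeGroup.of true) ^ n)⁻¹ : FreeGroup Bool) ∈
      Subgroup.normalClosure (dihedralRel n) :=
    Subgroup.subset_normalClosure rfl
  have h2 : PresentedGroup.mk (dihedralRel n)
      ((FreeGroup.of true * FreeGroup.of false) ^ n *
        ((FreeGroup.of false * FreeGroup.of true) ^ n)⁻¹) = 1 :=
    (QuotientGroup.eq_one_iff _).2 h
  rw [map_mul, map_inv, map_pow, map_pow, map_mul, map_mul] at h2
  exact mul_inv_eq_one.mp h2

lemma Xn_comm_a : (X n) ^ n * a n = a n * (X n) ^ n := by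
  have h := rel n
  have h1 : b n * a n = (a n)⁻¹ * X n * ((a n)⁻¹)⁻¹ := by
    rw [show X n = a n * b n from rfl]; group
  rw [h1, conj_pow] at h
  have h2 : a n * X n ^ n = a n * ((a n)⁻¹ * X n ^ n * ((a n)⁻¹)⁻¹) := by
    conv_lhs => rw [h]
  rw [h2]; group

-- C j = X^j a X^{-j}
def C (j : ℤ) : DihedralArtin n := X n ^ j * a n * (X n ^ j)⁻¹

lemma C_conj (j k : ℤ) : X n ^ k * C n j * (X n ^ k)⁻¹ = C n (j + k) := by
  unfold C
  rw [show j + k = k + j by ring, zpow_add]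
  group

lemma C_add_n (j : ℤ) : C n (j + n) = C n j := by
  unfold C
  rw [zpow_add, zpow_natCast]
  have h : (X n) ^ n * a n * ((X n) ^ n)⁻¹ = a n := by
    rw [Xn_comm_a]; group
  calc X n ^ j * X n ^ n * a n * (X n ^ j * X n ^ n)⁻¹
      = X n ^ j * (X n ^ n * a n * (X n ^ n)⁻¹) * (X n ^ j)⁻¹ := by group
    _ = X n ^ j * a n * (X n ^ j)⁻¹ := by rw [h]

lemma C_add_n_mul (j : ℤ) (m : ℤ) : C n (j + n * m) = C n j := by
  induction m using Int.induction_on with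
  | zero => simp
  | succ m ih => rw [show j + n*(m+1) = (j + n*m) + n by ring, C_add_n, ih]
  | pred m ih => rw [show j + n*(-m-1) = (j + n*(-m)) - n by ring] at *
                 rw [show j + n * -m = (j + n * -m - n) + n by ring, C_add_n] at ih
                 exact ih

lemma C_congr {j j' : ℤ} (h : j % (n:ℤ) = j' % (n:ℤ)) : C n j = C n j' := by
  have hd : (n:ℤ) ∣ (j' - j) := Int.ModEq.dvd h
  have : j' = j + n * ((j' - j) / n) := by
    rw [Int.mul_ediv_cancel' hd]; ring
  rw [this, C_add_n_mul]

-- the map D → Gr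
def fb : Bool → Gr n := fun s => match s with
  | true => A n
  | false => (A n)⁻¹ * Xg n

lemma Xn_central_G : (A n)⁻¹ * Xg n ^ (n:ℕ) * A n = Xg n ^ (n:ℕ) := by
  rw [Xg_pow, A, mul_assoc, inr_mul_inl, φ_apply, σ_zpow_of, ← mul_assoc, ← map_inv, ← map_mul]
  simp [ZMod.natCast_self]

lemma frel : ∀ r ∈ dihedralRel n, FreeGroup.lift (fb n) r = 1 := by
  intro r hr
  rw [dihedralRel, Set.mem_singleton_iff] at hr
  subst hr
  rw [map_mul, map_inv, map_pow, map_pow, map_mul, map_mul]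
  rw [FreeGroup.lift_apply_of, FreeGroup.lift_apply_of]
  show (fb n true * fb n false) ^ n * ((fb n false * fb n true) ^ n)⁻¹ = 1
  show (A n * ((A n)⁻¹ * Xg n)) ^ n * (((A n)⁻¹ * Xg n * A n) ^ n)⁻¹ = 1
  rw [mul_inv_cancel_left]
  have h1 : ((A n)⁻¹ * Xg n * A n) ^ n = (A n)⁻¹ * Xg n ^ (n:ℕ) * A n := by
    rw [show (A n)⁻¹ * Xg n * A n = (A n)⁻¹ * Xg n * ((A n)⁻¹)⁻¹ by group, conj_pow]
    group
  rw [h1, Xn_central_G]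
  group

def f : DihedralArtin n →* Gr n := PresentedGroup.toGroup (frel n)

lemma f_a : f n (a n) = A n := PresentedGroup.toGroup.of (frel n)

lemma f_b : f n (b n) = (A n)⁻¹ * Xg n := PresentedGroup.toGroup.of (frel n)

lemma f_X : f n (X n) = Xg n := by
  rw [X, map_mul, f_a, f_b]
  group


section
variable [NeZero n]

def g₁ : F n →* DihedralArtin n := FreeGroup.lift (fun i : ZMod n => C n i.val)

def g₂ : Multiplicative ℤ →* DihedralArtin n := zpowersHom _ (X n)

lemma val_cast_modeq (i : ZMod n) (k : ℤ) :
    ((((i + (k : ZMod n)).val : ℤ)) % n = ((i.val : ℤ) + k) % n) := by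
  have : (((((i + (k : ZMod n)).val : ℤ)) : ZMod n) = (((i.val : ℤ) + k : ℤ) : ZMod n)) := by
    push_cast
    simp [ZMod.natCast_val, ZMod.cast_id]
  exact (ZMod.intCast_eq_intCast_iff _ _ _).mp this

lemma hcompat : ∀ t, (g₁ n).comp ((φ n t).toMonoidHom) =
    (MulAut.conj (g₂ n t)).toMonoidHom.comp (g₁ n) := by
  intro t
  apply FreeGroup.ext_hom
  intro i
  set k := Multiplicative.toAdd t with hk
  have ht : t = Multiplicative.ofAdd k := rfl
  simp only [MonoidHom.comp_apply, MulEquiv.coe_toMonoidHom, MulAut.conj_apply]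
  rw [ht, φ_apply, σ_zpow_of]
  show g₁ n (FreeGroup.of _) = X n ^ k * g₁ n (FreeGroup.of i) * (X n ^ k)⁻¹
  rw [g₁, FreeGroup.lift_apply_of, FreeGroup.lift_apply_of, C_conj]
  exact C_congr n (val_cast_modeq n i k)

def g : Gr n →* DihedralArtin n := SemidirectProduct.lift (g₁ n) (g₂ n) (hcompat n)

lemma g_A : g n (A n) = a n := by
  rw [A, g, SemidirectProduct.lift_inl]
  rw [g₁, FreeGroup.lift_apply_of]
  simp [C, ZMod.val_zero]

lemma g_Xg : g n (Xg n) = X n := by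
  rw [Xg, g, SemidirectProduct.lift_inr]
  simp [g₂, zpowersHom_apply]

lemma gf : (g n).comp (f n) = MonoidHom.id _ := by
  apply PresentedGroup.ext
  intro x
  cases x
  · show g n (f n (b n)) = b n
    rw [f_b, map_mul, map_inv, g_A, g_Xg, X]
    group
  · show g n (f n (a n)) = a n
    rw [f_a, g_A]

lemma fg : (f n).comp (g n) = MonoidHom.id _ := by
  apply SemidirectProduct.hom_ext
  · apply FreeGroup.ext_hom
    intro i
    simp only [MonoidHom.comp_apply, MonoidHom.id_apply]
    rw [g, SemidirectProduct.lift_inl, g₁, FreeGroup.lift_apply_of, C]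
    rw [map_mul, map_mul, map_zpow, map_inv, map_zpow, f_X, f_a, Xg_zpow, A]
    rw [← map_inv, ← SemidirectProduct.inl_aut, φ_apply, σ_zpow_of]
    congr 1
    simp [ZMod.natCast_val, ZMod.cast_id]
  · apply MonoidHom.ext_mint
    simp only [MonoidHom.comp_apply, MonoidHom.id_apply]
    rw [show SemidirectProduct.inr (Multiplicative.ofAdd 1) = Xg n from rfl, g_Xg, f_X]

def e : DihedralArtin n ≃* Gr n := MonoidHom.toMulEquiv (f n) (g n) (gf n) (fg n)

-- projection Gr → Multiplicative (ZMod n)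
def piG : Gr n →* Multiplicative (ZMod n) :=
  (AddMonoidHom.toMultiplicative (Int.castAddHom (ZMod n))).comp SemidirectProduct.rightHom

lemma piG_apply (x : Gr n) :
    piG n x = Multiplicative.ofAdd ((Multiplicative.toAdd (SemidirectProduct.rightHom x) : ℤ) : ZMod n) := rfl

lemma mem_ker_piG (x : Gr n) :
    x ∈ (piG n).ker ↔ (n:ℤ) ∣ Multiplicative.toAdd (SemidirectProduct.rightHom x) := by
  rw [MonoidHom.mem_ker, piG_apply, ofAdd_eq_one, ZMod.intCast_zmod_eq_zero_iff_dvd]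

-- the generating set in Gr
def Sg : Set (Gr n) :=
  {SemidirectProduct.inr (Multiplicative.ofAdd (n:ℤ))} ∪
    Set.range (fun i : ZMod n => SemidirectProduct.inl (FreeGroup.of i))

lemma closure_Sg : Subgroup.closure (Sg n) = (piG n).ker := by
  apply le_antisymm
  · rw [Subgroup.closure_le]
    rintro x (rfl | ⟨i, rfl⟩)
    · rw [SetLike.mem_coe, mem_ker_piG]
      simp
    · rw [SetLike.mem_coe, mem_ker_piG]
      simp
  · intro x hx
    rw [mem_ker_piG] at hx
    obtain ⟨m, hm⟩ := hx
    rw [← SemidirectProduct.inl_left_mul_inr_right x]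
    apply mul_mem
    · have h1 : x.left ∈ (⊤ : Subgroup (F n)) := trivial
      rw [← FreeGroup.closure_range_of (ZMod n)] at h1
      have h3 : (SemidirectProduct.inl x.left : Gr n) ∈
          Subgroup.map (SemidirectProduct.inl : F n →* Gr n)
            (Subgroup.closure (Set.range FreeGroup.of)) :=
        Subgroup.mem_map_of_mem _ h1
      rw [MonoidHom.map_closure] at h3
      refine Subgroup.closure_mono ?_ h3
      rintro y ⟨w, ⟨i, rfl⟩, rfl⟩
      exact Or.inr ⟨i, rfl⟩
    · have hx2 : (SemidirectProduct.inr (SemidirectProduct.rightHom x) : Gr n) =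
          (SemidirectProduct.inr (Multiplicative.ofAdd (n:ℤ)) : Gr n) ^ m := by
        rw [← map_zpow]
        congr 1
        rw [← ofAdd_zsmul, smul_eq_mul, mul_comm, ← hm]
        exact (ofAdd_toAdd _).symm
      rw [SemidirectProduct.rightHom_eq_right] at hx2
      rw [hx2]
      have hgen : (SemidirectProduct.inr (Multiplicative.ofAdd (n:ℤ)) : Gr n) ∈
          Subgroup.closure (Sg n) := Subgroup.subset_closure (by left; rfl)
      exact Subgroup.zpow_mem _ hgen m

lemma σ_pow_n_hom : ((σ n ^ (n:ℕ) : MulAut (F n)) : F n ≃* F n) = MulEquiv.refl (F n) := by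
  apply MulEquiv.toMonoidHom_injective
  apply FreeGroup.ext_hom
  intro i
  show (σ n ^ (n:ℕ)) (FreeGroup.of i) = FreeGroup.of i
  rw [σ_pow_of]
  simp [ZMod.natCast_self]

lemma σ_pow_n : (σ n) ^ (n:ℕ) = 1 := σ_pow_n_hom n

lemma φ_n_mul (m : ℤ) : φ n (Multiplicative.ofAdd ((n:ℤ) * m)) = 1 := by
  rw [φ_apply, zpow_mul, zpow_natCast, σ_pow_n, one_zpow]

/-- The embedding of `F_n × ℤ` into the semidirect product, hitting `ker piG`. -/
def Φ : F n × Multiplicative ℤ →* Gr n :=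
  MonoidHom.mk' (fun p => SemidirectProduct.inl p.1 *
      SemidirectProduct.inr (Multiplicative.ofAdd ((n:ℤ) * Multiplicative.toAdd p.2)))
    (by
      rintro ⟨w₁, m₁⟩ ⟨w₂, m₂⟩
      show SemidirectProduct.inl (w₁ * w₂) *
          SemidirectProduct.inr (Multiplicative.ofAdd ((n:ℤ) * Multiplicative.toAdd (m₁ * m₂))) =
        (SemidirectProduct.inl w₁ *
          SemidirectProduct.inr (Multiplicative.ofAdd ((n:ℤ) * Multiplicative.toAdd m₁))) *
        (SemidirectProduct.inl w₂ *
          SemidirectProduct.inr (Multiplicative.ofAdd ((n:ℤ) * Multiplicative.toAdd m₂)))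
      rw [map_mul]
      have h : (SemidirectProduct.inr (Multiplicative.ofAdd ((n:ℤ) * Multiplicative.toAdd m₁)) : Gr n) *
          SemidirectProduct.inl w₂ = SemidirectProduct.inl w₂ *
            SemidirectProduct.inr (Multiplicative.ofAdd ((n:ℤ) * Multiplicative.toAdd m₁)) := by
        rw [inr_mul_inl, φ_n_mul]
        rfl
      have h2 : Multiplicative.toAdd (m₁ * m₂) = Multiplicative.toAdd m₁ + Multiplicative.toAdd m₂ := rfl
      rw [h2, mul_add, ofAdd_add, map_mul]
      simp only [← mul_assoc]
      rw [mul_assoc (SemidirectProduct.inl w₁)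
        (SemidirectProduct.inr (Multiplicative.ofAdd ((n:ℤ) * Multiplicative.toAdd m₁)))
        (SemidirectProduct.inl w₂), h]
      group)

lemma Φ_injective : Function.Injective (Φ n) := by
  rw [injective_iff_map_eq_one]
  rintro ⟨w, m⟩ hp
  have h1 : (SemidirectProduct.inl w * SemidirectProduct.inr
      (Multiplicative.ofAdd ((n:ℤ) * Multiplicative.toAdd m)) : Gr n) = 1 := hp
  rw [← SemidirectProduct.mk_eq_inl_mul_inr] at h1
  have hw : w = 1 := congrArg SemidirectProduct.left h1
  have hm : Multiplicative.ofAdd ((n:ℤ) * Multiplicative.toAdd m) = 1 :=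
    congrArg SemidirectProduct.right h1
  rw [ofAdd_eq_one, mul_eq_zero] at hm
  have hn0 : (n:ℤ) ≠ 0 := Int.natCast_ne_zero.mpr (NeZero.ne n)
  have hm0 : Multiplicative.toAdd m = 0 := by tauto
  have : m = 1 := by
    rw [← ofAdd_toAdd m, hm0]; rfl
  rw [hw, this]
  rfl

lemma Φ_range : (Φ n).range = (piG n).ker := by
  apply le_antisymm
  · rintro x ⟨⟨w, m⟩, rfl⟩
    rw [mem_ker_piG]
    show (n:ℤ) ∣ Multiplicative.toAdd (SemidirectProduct.rightHom
      (SemidirectProduct.inl w * SemidirectProduct.inr (Multiplicative.ofAdd ((n:ℤ) * Multiplicative.toAdd m))))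
    rw [map_mul, SemidirectProduct.rightHom_inl, SemidirectProduct.rightHom_inr, one_mul]
    exact ⟨Multiplicative.toAdd m, rfl⟩
  · intro x hx
    rw [mem_ker_piG] at hx
    obtain ⟨m, hm⟩ := hx
    refine ⟨(x.left, Multiplicative.ofAdd m), ?_⟩
    show SemidirectProduct.inl x.left * SemidirectProduct.inr (Multiplicative.ofAdd ((n:ℤ) * m)) = x
    rw [← hm, ofAdd_toAdd, SemidirectProduct.rightHom_eq_right,
      SemidirectProduct.inl_left_mul_inr_right]

/-- `ker piG ≃* F_n × ℤ`. -/
noncomputable def kerEquiv : (piG n).ker ≃* F n × Multiplicative ℤ :=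
  ((MonoidHom.ofInjective (Φ_injective n)).trans (MulEquiv.subgroupCongr (Φ_range n))).symm

lemma f_Xpow : f n (X n ^ n) = SemidirectProduct.inr (Multiplicative.ofAdd (n:ℤ)) := by
  rw [map_pow, f_X, Xg_pow]

lemma f_conj_pow (i : ℕ) :
    f n (X n ^ i * a n * (X n ^ i)⁻¹) = SemidirectProduct.inl (FreeGroup.of ((i : ZMod n))) := by
  rw [map_mul, map_mul, map_inv, map_pow, f_X, f_a, Xg_pow, A, ← map_inv,
    ← SemidirectProduct.inl_aut, φ_apply, σ_zpow_of]
  norm_num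

def S : Set (DihedralArtin n) :=
  {X n ^ n} ∪ {g | ∃ i : ℕ, i < n ∧ g = X n ^ i * a n * (X n ^ i)⁻¹}

lemma image_S : (f n) '' S n = Sg n := by
  ext x
  constructor
  · rintro ⟨y, (rfl | ⟨i, hi, rfl⟩), rfl⟩
    · rw [f_Xpow]
      exact Or.inl rfl
    · rw [f_conj_pow]
      exact Or.inr ⟨(i : ZMod n), rfl⟩
  · rintro (rfl | ⟨j, rfl⟩)
    · exact ⟨X n ^ n, Or.inl rfl, f_Xpow n⟩
    · refine ⟨X n ^ (j.val) * a n * (X n ^ (j.val))⁻¹, Or.inr ⟨j.val, ZMod.val_lt j, rfl⟩, ?_⟩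
      rw [f_conj_pow]
      congr 1
      simp [ZMod.natCast_val, ZMod.cast_id]

lemma f_injective : Function.Injective (f n) := (e n).injective

lemma closure_S_eq_ker : Subgroup.closure (S n) = ((piG n).comp (f n)).ker := by
  have h1 : Subgroup.map (f n) (Subgroup.closure (S n)) = (piG n).ker := by
    rw [MonoidHom.map_closure, image_S, closure_Sg]
  calc Subgroup.closure (S n)
      = Subgroup.comap (f n) (Subgroup.map (f n) (Subgroup.closure (S n))) :=
        (Subgroup.comap_map_eq_self_of_injective (f_injective n) _).symm
    _ = Subgroup.comap (f n) (piG n).ker := by rw [h1]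
    _ = ((piG n).comp (f n)).ker := MonoidHom.comap_ker _ _

lemma pi_surjective : Function.Surjective ((piG n).comp (f n)) := by
  intro z
  obtain ⟨k, hk⟩ := ZMod.intCast_surjective (Multiplicative.toAdd z)
  refine ⟨g n (SemidirectProduct.inr (Multiplicative.ofAdd k)), ?_⟩
  have hfg : f n (g n (SemidirectProduct.inr (Multiplicative.ofAdd k))) =
      SemidirectProduct.inr (Multiplicative.ofAdd k) :=
    DFunLike.congr_fun (fg n) (SemidirectProduct.inr (Multiplicative.ofAdd k))
  show piG n (f n _) = z
  rw [hfg, piG_apply, SemidirectProduct.rightHom_inr]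
  show Multiplicative.ofAdd ((k : ZMod n)) = z
  rw [hk]
  exact ofAdd_toAdd z

lemma map_e_closure :
    Subgroup.map ((e n : DihedralArtin n ≃* Gr n) : DihedralArtin n →* Gr n)
      (Subgroup.closure (S n)) = (piG n).ker := by
  rw [MonoidHom.map_closure]
  have h : ⇑((e n : DihedralArtin n ≃* Gr n) : DihedralArtin n →* Gr n) = ⇑(f n) := rfl
  rw [h, image_S, closure_Sg]

noncomputable def NEquiv : (Subgroup.closure (S n)) ≃* F n × Multiplicative ℤ :=
  ((MulEquiv.subgroupMap (e n) (Subgroup.closure (S n))).trans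
    (MulEquiv.subgroupCongr (map_e_closure n))).trans (kerEquiv n)

end
end DA

/-- `D_{2n}` contains a normal subgroup `N` of index `n` isomorphic to `𝔽_n × ℤ`, namely
`N = ⟨(ab)^n, a, (ab)a(ab)⁻¹, …, (ab)^{n-1} a (ab)^{-(n-1)}⟩`, with `D_{2n}/N ≅ C_n`. -/
theorem dihedralArtin_normal_subgroup (n : ℕ) (hn : 1 ≤ n) :
    ∃ N : Subgroup (DihedralArtin n),
      N = Subgroup.closure
          ({((PresentedGroup.of true : DihedralArtin n) * PresentedGroup.of false) ^ n} ∪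
            {g : DihedralArtin n | ∃ i : ℕ, i < n ∧
              g = ((PresentedGroup.of true : DihedralArtin n) * PresentedGroup.of false) ^ i *
                PresentedGroup.of true *
                (((PresentedGroup.of true : DihedralArtin n) * PresentedGroup.of false) ^ i)⁻¹}) ∧
      N.Normal ∧ N.index = n ∧
      Nonempty (N ≃* FreeGroup (Fin n) × Multiplicative ℤ) ∧
      ∃ π : DihedralArtin n →* Multiplicative (ZMod n),
        Function.Surjective π ∧ π.ker = N := by
  obtain ⟨m, rfl⟩ : ∃ m, n = m + 1 := ⟨n - 1, by omega⟩
  set n := m + 1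
  haveI : NeZero n := ⟨by omega⟩
  refine ⟨Subgroup.closure (DA.S n), rfl, ?_, ?_, ?_, (DA.piG n).comp (DA.f n),
    DA.pi_surjective n, (DA.closure_S_eq_ker n).symm⟩
  · rw [DA.closure_S_eq_ker]
    exact MonoidHom.normal_ker _
  · rw [DA.closure_S_eq_ker, Subgroup.index_ker,
      MonoidHom.range_eq_top_of_surjective _ (DA.pi_surjective n)]
    rw [Subgroup.card_top]
    exact (Nat.card_congr Multiplicative.toAdd).trans (Nat.card_zmod n)
  · have zmodfin : ZMod n ≃ Fin n := Equiv.refl (Fin n)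
    exact ⟨(DA.NEquiv n).trans
      (MulEquiv.prodCongr (FreeGroup.freeGroupCongr zmodfin) (MulEquiv.refl _))⟩
end

section
/- Every subgroup of the even dihedral Artin group $D_{2n}$ that does not contain a non-abelian free subgroup is isomorphic to a subgroup of the Klein bottle group $K = \langle x, y \mid x^2 = y^2 \rangle$. -/
/-- The relation set for the Klein bottle group `K = ⟨x, y ∣ x² = y²⟩`. -/
def kleinRel : Set (FreeGroup Bool) :=
  {(FreeGroup.of true) ^ 2 * ((FreeGroup.of false) ^ 2)⁻¹}

/-- The Klein bottle group. -/
abbrev KleinBottleGroup := PresentedGroup kleinRel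

open SemidirectProduct Multiplicative

namespace DKProof

set_option linter.unusedSectionVars false
set_option linter.unusedTactic false



lemma mk_rel_one {α : Type*} {rels : Set (FreeGroup α)} {r : FreeGroup α} (h : r ∈ rels) :
    PresentedGroup.mk rels r = 1 := by
  apply (QuotientGroup.eq_one_iff _).mpr
  exact Subgroup.subset_normalClosure h

abbrev MZ := Multiplicative ℤ

def negA : MulAut MZ := MulEquiv.inv MZ

lemma negA_apply (x : MZ) : negA x = x⁻¹ := rfl

noncomputable def φK : MZ →* MulAut MZ := zpowersHom _ negA

abbrev MK := MZ ⋊[φK] MZ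

lemma negA_sq : negA * negA = 1 := by
  ext x
  simp [MulAut.mul_apply, negA_apply]

lemma negA_zpow_even {s : ℤ} (hs : Even s) : negA ^ s = 1 := by
  obtain ⟨t, rfl⟩ := hs
  have h : t + t = 2 * t := by ring
  rw [h, zpow_mul]
  have h2 : negA ^ (2 : ℤ) = 1 := by
    rw [show (2:ℤ) = 1 + 1 by norm_num, zpow_add, zpow_one, negA_sq]
  rw [h2, one_zpow]

lemma negA_zpow_odd {s : ℤ} (hs : Odd s) : negA ^ s = negA := by
  obtain ⟨t, rfl⟩ := hs
  rw [zpow_add, zpow_one, negA_zpow_even (even_two_mul t), one_mul]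

lemma φK_apply (s : ℤ) : φK (ofAdd s) = negA ^ s := by
  rw [φK, zpowersHom_apply, toAdd_ofAdd]

def xK : KleinBottleGroup := PresentedGroup.of true
def yK : KleinBottleGroup := PresentedGroup.of false

lemma klein_rel : xK ^ 2 = yK ^ 2 := by
  have h := mk_rel_one (rels := kleinRel)
    (r := (FreeGroup.of true) ^ 2 * ((FreeGroup.of false) ^ 2)⁻¹) rfl
  rw [map_mul, map_inv, map_pow, map_pow, mul_inv_eq_one] at h
  exact h

noncomputable def uK : KleinBottleGroup := xK * yK⁻¹

lemma xK_conj_uK : xK * uK * xK⁻¹ = uK⁻¹ := by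
  have h2 : xK * xK = yK * yK := by
    have h := klein_rel; rwa [pow_two, pow_two] at h
  rw [uK, mul_inv_rev, inv_inv]
  calc xK * (xK * yK⁻¹) * xK⁻¹ = (xK * xK) * yK⁻¹ * xK⁻¹ := by group
  _ = yK * yK * yK⁻¹ * xK⁻¹ := by rw [h2]
  _ = yK * xK⁻¹ := by group

lemma xK_sq_commute : Commute (xK ^ 2) uK := by
  have h : xK ^ 2 * uK * (xK ^ 2)⁻¹ = uK := by
    calc xK ^ 2 * uK * (xK ^ 2)⁻¹ = xK * (xK * uK * xK⁻¹) * xK⁻¹ := by rw [pow_two]; group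
    _ = xK * uK⁻¹ * xK⁻¹ := by rw [xK_conj_uK]
    _ = (xK * uK * xK⁻¹)⁻¹ := by group
    _ = uK := by rw [xK_conj_uK, inv_inv]
  exact mul_inv_eq_iff_eq_mul.mp h

lemma xK_zpow_commute_even {s : ℤ} (hs : Even s) : Commute (xK ^ s) uK := by
  obtain ⟨t, rfl⟩ := hs
  have h : xK ^ (t + t) = (xK ^ 2) ^ t := by
    rw [← zpow_natCast xK 2, ← zpow_mul]
    ring_nf
  rw [h]
  exact xK_sq_commute.zpow_left t

lemma xK_zpow_conj_even {s : ℤ} (hs : Even s) : xK ^ s * uK * xK ^ (-s) = uK := by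
  have h := (xK_zpow_commute_even hs).eq
  rw [h, mul_assoc, ← zpow_add, add_neg_cancel, zpow_zero, mul_one]

lemma xK_zpow_conj_odd {s : ℤ} (hs : Odd s) : xK ^ s * uK * xK ^ (-s) = uK⁻¹ := by
  obtain ⟨t, rfl⟩ := hs
  have he : Even (2 * t) := even_two_mul t
  calc xK ^ (2*t+1) * uK * xK ^ (-(2*t+1))
      = xK ^ (2*t) * (xK * uK * xK⁻¹) * xK ^ (-(2*t)) := by
        group
    _ = xK ^ (2*t) * uK⁻¹ * xK ^ (-(2*t)) := by rw [xK_conj_uK]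
    _ = uK⁻¹ := by
        have hc : Commute (xK ^ (2*t)) uK⁻¹ := (xK_zpow_commute_even he).inv_right
        rw [hc.eq, mul_assoc, ← zpow_add, add_neg_cancel, zpow_zero, mul_one]






lemma conj_cond (g : MZ) : (zpowersHom _ uK).comp (φK g).toMonoidHom
    = (MulAut.conj ((zpowersHom _ xK) g)).toMonoidHom.comp (zpowersHom _ uK) := by
  apply MonoidHom.ext_mint
  simp only [MonoidHom.comp_apply, MulEquiv.coe_toMonoidHom, MulAut.conj_apply, zpowersHom_apply,
    toAdd_ofAdd, zpow_one]
  have hg : φK g = negA ^ (toAdd g) := φK_apply (toAdd g)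
  rcases Int.even_or_odd (toAdd g) with he | ho
  · rw [hg, negA_zpow_even he]
    have h2 := xK_zpow_conj_even (s := toAdd g) he
    rw [zpow_neg] at h2
    simpa using h2.symm
  · rw [hg, negA_zpow_odd ho]
    have h2 := xK_zpow_conj_odd (s := toAdd g) ho
    rw [zpow_neg] at h2
    rw [negA_apply]
    simp only [toAdd_inv, toAdd_ofAdd, zpow_neg, zpow_one]
    exact h2.symm

noncomputable def MtoK : MK →* KleinBottleGroup :=
  SemidirectProduct.lift (zpowersHom _ uK) (zpowersHom _ xK) conj_cond

noncomputable def fK : Bool → MK := fun t =>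
  if t then inr (ofAdd 1) else (inl (ofAdd (1:ℤ)))⁻¹ * inr (ofAdd 1)

lemma TUT : inr (ofAdd (1:ℤ)) * (inl (ofAdd (1:ℤ)))⁻¹ * (inr (ofAdd (1:ℤ)))⁻¹
    = (inl (ofAdd (1:ℤ)) : MK) := by
  have h := (inl_aut (φ := φK) (ofAdd (1:ℤ)) ((ofAdd (1:ℤ))⁻¹)).symm
  have hφ : φK (ofAdd (1:ℤ)) ((ofAdd (1:ℤ))⁻¹) = ofAdd (1:ℤ) := by
    rw [φK_apply, zpow_one, negA_apply, inv_inv]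
  rw [hφ, map_inv (inl : MZ →* MK), map_inv (inr : MZ →* MK)] at h
  exact h

lemma fK_rels : ∀ r ∈ kleinRel, FreeGroup.lift fK r = 1 := by
  intro r hr
  rw [kleinRel, Set.mem_singleton_iff] at hr
  subst hr
  simp only [map_mul, map_inv, map_pow, FreeGroup.lift_apply_of, fK, if_true, if_false]
  rw [mul_inv_eq_one]
  set U : MK := inl (ofAdd (1:ℤ))
  set T : MK := inr (ofAdd (1:ℤ))
  have key : T * U⁻¹ * T⁻¹ = U := TUT
  rw [pow_two, pow_two]
  calc T * T = U⁻¹ * U * (T * T) := by group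
  _ = U⁻¹ * (T * U⁻¹ * T⁻¹) * (T * T) := by rw [key]
  _ = (U⁻¹ * T) * (U⁻¹ * T) := by group

noncomputable def KtoM : KleinBottleGroup →* MK := PresentedGroup.toGroup fK_rels

lemma KtoM_MtoK : KtoM.comp MtoK = MonoidHom.id MK := by
  apply SemidirectProduct.hom_ext
  · apply MonoidHom.ext_mint
    simp only [MonoidHom.comp_apply, MonoidHom.id_apply]
    rw [MtoK, SemidirectProduct.lift_inl, zpowersHom_apply, toAdd_ofAdd, zpow_one]
    rw [uK, xK, yK]
    rw [map_mul, map_inv, KtoM, PresentedGroup.toGroup.of, PresentedGroup.toGroup.of]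
    show inr (ofAdd (1:ℤ)) * ((inl (ofAdd (1:ℤ)))⁻¹ * inr (ofAdd (1:ℤ)))⁻¹ = inl (ofAdd (1:ℤ))
    group
  · apply MonoidHom.ext_mint
    simp only [MonoidHom.comp_apply, MonoidHom.id_apply]
    rw [MtoK, SemidirectProduct.lift_inr, zpowersHom_apply, toAdd_ofAdd, zpow_one]
    rw [xK, KtoM, PresentedGroup.toGroup.of]
    rfl

lemma MtoK_injective : Function.Injective MtoK := by
  have h : Function.LeftInverse KtoM MtoK := fun x => by
    have := DFunLike.congr_fun KtoM_MtoK x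
    simpa using this
  exact h.injective




section Dihedral


variable (n : ℕ) [NeZero n]

abbrev Fn := FreeGroup (ZMod n)

def σA : MulAut (Fn n) := (FreeGroup.freeGroupCongr (Equiv.addRight (1 : ZMod n)))

lemma σA_of (i : ZMod n) : σA n (FreeGroup.of i) = FreeGroup.of (i + 1) := by
  simp [σA]

lemma σA_inv_of (i : ZMod n) : (σA n)⁻¹ (FreeGroup.of i) = FreeGroup.of (i - 1) := by
  have : (σA n)⁻¹ = (FreeGroup.freeGroupCongr (Equiv.addRight (1 : ZMod n)).symm) := by
    rw [σA, ← FreeGroup.freeGroupCongr_symm]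
    rfl
  rw [this]
  simp [sub_eq_add_neg]

noncomputable def φD : MZ →* MulAut (Fn n) := zpowersHom _ (σA n)

lemma σA_zpow (m : ℤ) : ∀ i : ZMod n,
    ((σA n) ^ m) (FreeGroup.of i) = FreeGroup.of (i + m) := by
  induction m using Int.induction_on with
  | zero => intro i; simp
  | succ m ih =>
      intro i
      rw [zpow_add_one, MulAut.mul_apply, σA_of, ih (i + 1)]
      congr 1
      push_cast
      ring
  | pred m ih =>
      intro i
      rw [zpow_sub_one, MulAut.mul_apply, σA_inv_of, ih (i - 1)]
      congr 1
      push_cast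
      ring

lemma φD_of (m : ℤ) (i : ZMod n) :
    φD n (ofAdd m) (FreeGroup.of i) = FreeGroup.of (i + m) := by
  rw [φD, zpowersHom_apply, toAdd_ofAdd]
  exact σA_zpow n m i

abbrev Gn := Fn n ⋊[φD n] MZ

def aD : DihedralArtin n := PresentedGroup.of true
def bD : DihedralArtin n := PresentedGroup.of false
def pD : DihedralArtin n := aD n * bD n

lemma rel_D : (aD n * bD n) ^ n = (bD n * aD n) ^ n := by
  have h := mk_rel_one (rels := dihedralRel n)
    (r := (FreeGroup.of true * FreeGroup.of false) ^ n *
      ((FreeGroup.of false * FreeGroup.of true) ^ n)⁻¹) rfl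
  rw [map_mul, map_inv, map_pow, map_pow, map_mul, map_mul, mul_inv_eq_one] at h
  exact h

lemma comm_a_pn : Commute (aD n) ((pD n) ^ n) := by
  have hsc : SemiconjBy (aD n) (bD n * aD n) (aD n * bD n) := by
    unfold SemiconjBy
    group
  have h := hsc.pow_right n
  unfold SemiconjBy at h
  rw [← rel_D n] at h
  unfold Commute SemiconjBy
  rw [pD]
  exact h

lemma comm_a_pzn (s : ℤ) : Commute (aD n) ((pD n) ^ ((n : ℤ) * s)) := by
  have h : Commute (aD n) ((pD n) ^ (n:ℤ)) := by
    rw [zpow_natCast]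
    exact comm_a_pn n
  have := h.zpow_right s
  rwa [← zpow_mul] at this

lemma commKey {c c' : ℤ} (h : (n:ℤ) ∣ (c - c')) :
    pD n ^ c * aD n * pD n ^ (-c) = pD n ^ c' * aD n * pD n ^ (-c') := by
  obtain ⟨s, hs⟩ := h
  have hc : c = c' + (n:ℤ) * s := by linarith
  subst hc
  have hcomm := (comm_a_pzn n s).eq
  calc pD n ^ (c' + (n:ℤ)*s) * aD n * pD n ^ (-(c' + (n:ℤ)*s))
      = pD n ^ c' * (pD n ^ ((n:ℤ)*s) * aD n * (pD n ^ ((n:ℤ)*s))⁻¹) * pD n ^ (-c') := by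
        rw [zpow_add, neg_add, zpow_add, zpow_neg, zpow_neg]
        group
    _ = pD n ^ c' * aD n * pD n ^ (-c') := by
        rw [← hcomm]
        group

noncomputable def wD : Fn n →* DihedralArtin n :=
  FreeGroup.lift (fun i => pD n ^ (i.val : ℤ) * aD n * pD n ^ (-(i.val : ℤ)))

lemma val_dvd (i : ZMod n) (m : ℤ) :
    (n:ℤ) ∣ ((((i + m : ZMod n)).val : ℤ) - ((i.val : ℤ) + m)) := by
  rw [← ZMod.intCast_zmod_eq_zero_iff_dvd]
  push_cast [ZMod.natCast_val, ZMod.cast_id]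
  ring

lemma compatD : ∀ g : MZ, (wD n).comp ((φD n) g).toMonoidHom
    = (MulAut.conj ((zpowersHom _ (pD n)) g)).toMonoidHom.comp (wD n) := by
  intro g
  apply FreeGroup.ext_hom
  intro i
  simp only [MonoidHom.comp_apply, MulEquiv.coe_toMonoidHom, MulAut.conj_apply, zpowersHom_apply]
  have hφ : (φD n) g (FreeGroup.of i) = FreeGroup.of (i + ((toAdd g : ℤ) : ZMod n)) :=
    φD_of n (toAdd g) i
  rw [hφ, wD, FreeGroup.lift_apply_of, FreeGroup.lift_apply_of]
  have step : pD n ^ (toAdd g) * (pD n ^ ((i.val : ℤ)) * aD n * pD n ^ (-(i.val:ℤ))) *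
      (pD n ^ (toAdd g))⁻¹
      = pD n ^ ((i.val : ℤ) + toAdd g) * aD n * pD n ^ (-((i.val:ℤ) + toAdd g)) := by
    rw [zpow_add, neg_add, zpow_add, zpow_neg, zpow_neg]
    group
  rw [step]
  exact commKey n (val_dvd n i (toAdd g))

noncomputable def fD : Bool → Gn n := fun t =>
  if t then inl (FreeGroup.of (0 : ZMod n))
  else (inl (FreeGroup.of (0 : ZMod n)))⁻¹ * inr (ofAdd 1)

lemma fD_rels : ∀ r ∈ dihedralRel n, FreeGroup.lift (fD n) r = 1 := by
  intro r hr
  rw [dihedralRel, Set.mem_singleton_iff] at hr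
  subst hr
  simp only [map_mul, map_inv, map_pow, FreeGroup.lift_apply_of]
  show ((fD n true) * (fD n false)) ^ n * (((fD n false) * (fD n true)) ^ n)⁻¹ = 1
  have hT : fD n true = inl (FreeGroup.of (0 : ZMod n)) := rfl
  have hF : fD n false = (inl (FreeGroup.of (0 : ZMod n)))⁻¹ * inr (ofAdd 1) := rfl
  rw [hT, hF]
  set A : Gn n := inl (FreeGroup.of (0 : ZMod n))
  set T : Gn n := inr (ofAdd (1:ℤ))
  have hAB : A * (A⁻¹ * T) = T := by group
  have hBA : A⁻¹ * T * A = A⁻¹ * (T * A * A⁻¹) * A := by group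
  have key : T ^ n * A * (T ^ n)⁻¹ = A := by
    have hTn : T ^ n = inr (ofAdd (n : ℤ)) := by
      rw [← map_pow]
      congr 1
      rw [← ofAdd_nsmul]
      congr 1
      simp
    rw [hTn, ← map_inv]
    have h := (inl_aut (φ := φD n) (ofAdd (n:ℤ)) (FreeGroup.of (0 : ZMod n))).symm
    rw [φD_of] at h
    have h0 : ((0 : ZMod n) + ((n:ℤ) : ZMod n)) = 0 := by
      push_cast
      simp
    rw [h0] at h
    exact h
  have hcomm : A * T ^ n = T ^ n * A := (mul_inv_eq_iff_eq_mul.mp key).symm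
  rw [hAB]
  have hconj : (A⁻¹ * T * A) ^ n = A⁻¹ * T ^ n * A := by
    have h1 : ∀ X : Gn n, A⁻¹ * X * A = (MulAut.conj A⁻¹) X := by
      intro X
      rw [MulAut.conj_apply, inv_inv]
    rw [h1 T, h1 (T ^ n), ← map_pow]
  rw [mul_inv_eq_one]
  calc T ^ n = A⁻¹ * (A * T ^ n) := (inv_mul_cancel_left A (T ^ n)).symm
    _ = A⁻¹ * (T ^ n * A) := by rw [hcomm]
    _ = (A⁻¹ * T * A) ^ n := by rw [hconj, mul_assoc]
  
noncomputable def ΦD : DihedralArtin n →* Gn n := PresentedGroup.toGroup (fD_rels n)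

noncomputable def ΨD : Gn n →* DihedralArtin n :=
  SemidirectProduct.lift (wD n) (zpowersHom _ (pD n)) (compatD n)

lemma ΨΦ : (ΨD n).comp (ΦD n) = MonoidHom.id _ := by
  apply PresentedGroup.ext
  intro x
  cases x with
  | true =>
      simp only [MonoidHom.comp_apply, MonoidHom.id_apply]
      rw [ΦD, PresentedGroup.toGroup.of]
      have hT : fD n true = inl (FreeGroup.of (0 : ZMod n)) := rfl
      rw [hT, ΨD, SemidirectProduct.lift_inl, wD, FreeGroup.lift_apply_of]
      rw [ZMod.val_zero]
      show pD n ^ (0:ℤ) * aD n * pD n ^ (-(0:ℤ)) = aD n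
      simp
  | false =>
      simp only [MonoidHom.comp_apply, MonoidHom.id_apply]
      rw [ΦD, PresentedGroup.toGroup.of]
      have hF : fD n false = (inl (FreeGroup.of (0 : ZMod n)))⁻¹ * inr (ofAdd 1) := rfl
      rw [hF, map_mul, map_inv, ΨD, SemidirectProduct.lift_inl, SemidirectProduct.lift_inr,
        wD, FreeGroup.lift_apply_of, zpowersHom_apply, toAdd_ofAdd, zpow_one]
      rw [ZMod.val_zero]
      show (pD n ^ (0:ℤ) * aD n * pD n ^ (-(0:ℤ)))⁻¹ * pD n = bD n
      simp only [zpow_zero, neg_zero, one_mul, mul_one]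
      rw [pD]
      group

lemma ΦD_injective : Function.Injective (ΦD n) := by
  have h : Function.LeftInverse (ΨD n) (ΦD n) := fun x => by
    have := DFunLike.congr_fun (ΨΦ n) x
    simpa using this
  exact h.injective


end Dihedral



lemma MZ_toAdd_zpow (x : MZ) (m : ℤ) : toAdd (x ^ m) = m * toAdd x := by
  rw [toAdd_zpow, smul_eq_mul]

lemma MZ_eq_one {x : MZ} (h : toAdd x = 0) : x = 1 := by
  have : x = ofAdd (toAdd x) := rfl
  rw [this, h]
  rfl

lemma ofAdd_one_zpow (m : ℤ) : (ofAdd (1:ℤ)) ^ m = ofAdd m := by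
  apply toAdd.injective
  rw [MZ_toAdd_zpow]
  simp

lemma embed_MK {Γ : Type*} [Group Γ] (r : Γ →* MZ) {X : Type*}
    (lam : ↥r.ker →* FreeGroup X) (hlam : Function.Injective lam)
    (hfree : ¬ ∃ f : FreeGroup Bool →* Γ, Function.Injective f) :
    ∃ θ : Γ →* MK, Function.Injective θ := by
  classical
  -- dichotomy for C
  have hdich : r.ker = ⊥ ∨ Nonempty (↥r.ker ≃* MZ) := by
    by_cases hC : r.ker = ⊥
    · exact Or.inl hC
    · right
      haveI : IsFreeGroup ↥lam.range := subgroupIsFreeOfIsFree _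
      set S := IsFreeGroup.Generators ↥lam.range with hSdef
      have eC : ↥r.ker ≃* ↥lam.range := MonoidHom.ofInjective hlam
      have eR : ↥lam.range ≃* FreeGroup S := IsFreeGroup.toFreeGroup ↥lam.range
      have hsub : Subsingleton S := by
        by_contra hns
        rw [not_subsingleton_iff_nontrivial] at hns
        obtain ⟨s₁, s₂, h12⟩ := hns.exists_pair_ne
        set fB : Bool → S := fun t => if t then s₁ else s₂ with hfB
        set gB : S → Bool := fun s => decide (s = s₁) with hgB
        have hgf : gB ∘ fB = id := by
          funext t
          cases t with
          | true => simp [hfB, hgB]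
          | false => simp [hfB, hgB]; exact fun h => absurd h.symm h12
        have hmapinj : Function.Injective (FreeGroup.map fB) := by
          intro u v huv
          have h2 : FreeGroup.map gB (FreeGroup.map fB u)
              = FreeGroup.map gB (FreeGroup.map fB v) := by rw [huv]
          rw [FreeGroup.map.comp, FreeGroup.map.comp, hgf, FreeGroup.map.id, FreeGroup.map.id] at h2
          exact h2
        apply hfree
        refine ⟨(r.ker).subtype.comp (eC.symm.toMonoidHom.comp
          (eR.symm.toMonoidHom.comp (FreeGroup.map fB))), ?_⟩
        apply Subtype.val_injective.comp
        apply eC.symm.injective.comp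
        exact eR.symm.injective.comp hmapinj
      rcases isEmpty_or_nonempty S with hS | hS
      · exfalso
        apply hC
        have hall : ∀ w : FreeGroup S, w = 1 := by
          intro w
          induction w using FreeGroup.induction_on with
          | C1 => rfl
          | of x => exact isEmptyElim x
          | inv_of x ih => rw [ih]; simp
          | mul x y ihx ihy => rw [ihx, ihy, one_mul]
        apply (Subgroup.eq_bot_iff_forall _).mpr
        intro x hx
        have h1 : eR (eC ⟨x, hx⟩) = 1 := hall _
        have h2 : eC ⟨x, hx⟩ = 1 := by
          apply eR.injective
          rw [h1, map_one]
        have h3 : (⟨x, hx⟩ : ↥r.ker) = 1 := by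
          apply eC.injective
          rw [h2, map_one]
        exact congrArg Subtype.val h3
      · haveI : Unique S := uniqueOfSubsingleton (Classical.arbitrary S)
        have eint : FreeGroup S ≃* MZ := by
          refine MonoidHom.toMulEquiv
            (FreeGroup.lift (fun _ => ofAdd (1:ℤ)))
            (zpowersHom _ (FreeGroup.of (default : S))) ?_ ?_
          · apply FreeGroup.ext_hom
            intro s
            simp only [MonoidHom.comp_apply, FreeGroup.lift_apply_of, zpowersHom_apply, toAdd_ofAdd,
              zpow_one, MonoidHom.id_apply]
            congr 1
            exact Subsingleton.elim _ _
          · apply MonoidHom.ext_mint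
            simp only [MonoidHom.comp_apply, zpowersHom_apply, toAdd_ofAdd, zpow_one,
              FreeGroup.lift_apply_of, MonoidHom.id_apply]
        exact ⟨(eC.trans eR).trans eint⟩
  rcases hdich with hC | hne
  · -- r injective
    refine ⟨(inr : MZ →* MK).comp r, ?_⟩
    have hr : Function.Injective r := by
      rw [← MonoidHom.ker_eq_bot_iff]
      exact hC
    exact inr_injective.comp hr
  obtain ⟨χ⟩ := hne
  by_cases hQ : r.range = ⊥
  · -- everything in the kernel
    have hmem : ∀ x : Γ, x ∈ r.ker := by
      intro x
      have h1 : r x ∈ r.range := ⟨x, rfl⟩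
      rw [hQ, Subgroup.mem_bot] at h1
      exact h1
    let toC : Γ →* ↥r.ker :=
      { toFun := fun x => ⟨x, hmem x⟩
        map_one' := rfl
        map_mul' := fun _ _ => rfl }
    refine ⟨(inl : MZ →* MK).comp (χ.toMonoidHom.comp toC), ?_⟩
    apply inl_injective.comp
    apply Function.Injective.comp χ.injective
    intro x y hxy
    exact congrArg Subtype.val hxy
  · -- main case
    haveI : IsCyclic ↥r.range := Subgroup.isCyclic _
    obtain ⟨g₀, hg₀⟩ := IsCyclic.exists_generator (α := ↥r.range)
    obtain ⟨h₀, hh₀⟩ := g₀.2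
    set g : MZ := (g₀ : MZ) with hgdef
    set d : ℤ := toAdd g with hddef
    have hgne : g ≠ 1 := by
      intro hg1
      apply hQ
      apply (Subgroup.eq_bot_iff_forall _).mpr
      intro x hx
      obtain ⟨m, hm⟩ := hg₀ ⟨x, hx⟩
      have h1 : g ^ m = x := by
        have := congrArg (Subtype.val : ↥r.range → MZ) hm
        simpa using this
      rw [← h1, hg1, one_zpow]
    have hd : d ≠ 0 := by
      intro h0
      exact hgne (MZ_eq_one h0)
    have hdvd : ∀ x : Γ, d ∣ toAdd (r x) := by
      intro x
      obtain ⟨m, hm⟩ := hg₀ ⟨r x, ⟨x, rfl⟩⟩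
      have h1 : g ^ m = r x := by
        have := congrArg (Subtype.val : ↥r.range → MZ) hm
        simpa using this
      refine ⟨m, ?_⟩
      rw [← h1, MZ_toAdd_zpow]
      ring
    set k : Γ → ℤ := fun x => toAdd (r x) / d with hkdef
    have hkspec : ∀ x : Γ, toAdd (r x) = d * k x := fun x =>
      (Int.mul_ediv_cancel' (hdvd x)).symm
    have hkadd : ∀ x y : Γ, k (x * y) = k x + k y := by
      intro x y
      have h1 : d * k (x * y) = d * (k x + k y) := by
        rw [← hkspec, map_mul, toAdd_mul, hkspec x, hkspec y]
        ring
      exact mul_left_cancel₀ hd h1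
    have hk1 : k 1 = 0 := by
      have h1 : d * k 1 = 0 := by
        rw [← hkspec, map_one]
        rfl
      exact (mul_eq_zero.mp h1).resolve_left hd
    have hrh : ∀ s : ℤ, toAdd (r (h₀ ^ s)) = d * s := by
      intro s
      rw [map_zpow, hh₀, MZ_toAdd_zpow]
      ring
    have memC : ∀ x : Γ, x * h₀ ^ (-(k x)) ∈ r.ker := by
      intro x
      rw [MonoidHom.mem_ker, map_mul]
      apply MZ_eq_one
      rw [toAdd_mul, hkspec x, hrh]
      ring
    set z : Γ → ↥r.ker := fun x => ⟨x * h₀ ^ (-(k x)), memC x⟩ with hzdef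
    set j : Γ → ℤ := fun x => toAdd (χ (z x)) with hjdef
    have hz1 : z 1 = 1 := by
      apply Subtype.ext
      show (1 : Γ) * h₀ ^ (-(k 1)) = 1
      rw [hk1]
      simp
    have hj1 : j 1 = 0 := by
      show toAdd (χ (z 1)) = 0
      rw [hz1, map_one]
      rfl
    have hCr : ∀ c : ↥r.ker, r (c : Γ) = 1 := fun c => c.2
    have hconjC : ∀ (s : ℤ) (c : ↥r.ker), h₀ ^ s * (c : Γ) * h₀ ^ (-s) ∈ r.ker := by
      intro s c
      rw [MonoidHom.mem_ker, map_mul, map_mul, hCr c]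
      apply MZ_eq_one
      rw [toAdd_mul, toAdd_mul, hrh, hrh]
      simp
    have hconj1 : ∀ c : ↥r.ker, h₀ * (c : Γ) * h₀⁻¹ ∈ r.ker := by
      intro c
      have := hconjC 1 c
      simpa using this
    set cA : ↥r.ker →* ↥r.ker := {
      toFun := fun c => ⟨h₀ * (c : Γ) * h₀⁻¹, hconj1 c⟩
      map_one' := by
        apply Subtype.ext
        show h₀ * ((1 : ↥r.ker) : Γ) * h₀⁻¹ = 1
        simp
      map_mul' := fun c c' => by
        apply Subtype.ext
        show h₀ * ((c : Γ) * (c' : Γ)) * h₀⁻¹ = (h₀ * c * h₀⁻¹) * (h₀ * c' * h₀⁻¹)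
        group } with hcAdef
    have hcA_apply : ∀ c : ↥r.ker, (cA c : Γ) = h₀ * (c : Γ) * h₀⁻¹ := fun c => rfl
    have hcA_surj : Function.Surjective cA := by
      intro c
      have hmem' : h₀⁻¹ * (c : Γ) * h₀ ∈ r.ker := by
        have := hconjC (-1) c
        simpa using this
      refine ⟨⟨h₀⁻¹ * (c : Γ) * h₀, hmem'⟩, ?_⟩
      apply Subtype.ext
      show h₀ * (h₀⁻¹ * (c : Γ) * h₀) * h₀⁻¹ = (c : Γ)
      group
    set e : ℤ := toAdd (χ (cA (χ.symm (ofAdd 1)))) with hedef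
    have hτ : ∀ c : ↥r.ker, χ (cA c) = ofAdd (toAdd (χ c) * e) := by
      intro c
      have hc : c = χ.symm ((ofAdd (1:ℤ)) ^ (toAdd (χ c))) := by
        rw [ofAdd_one_zpow]
        simp
      conv_lhs => rw [hc]
      rw [map_zpow, map_zpow, map_zpow]
      apply toAdd.injective
      rw [MZ_toAdd_zpow, ← hedef, toAdd_ofAdd]
    have he_unit : e = 1 ∨ e = -1 := by
      obtain ⟨c, hc⟩ := hcA_surj (χ.symm (ofAdd 1))
      have h1 : χ (cA c) = ofAdd 1 := by
        rw [hc]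
        simp
      rw [hτ c] at h1
      have h2 : e * toAdd (χ c) = 1 := by
        have := congrArg toAdd h1
        simpa using this
      have h3 : IsUnit e := IsUnit.of_mul_eq_one (toAdd (χ c)) h2
      exact Int.isUnit_iff.mp h3
    -- z multiplicativity skeleton
    have hz_mul : ∀ x y : Γ, ((z (x * y) : Γ))
        = (z x : Γ) * (h₀ ^ (k x) * (z y : Γ) * h₀ ^ (-(k x))) := by
      intro x y
      show x * y * h₀ ^ (-(k (x * y))) = (x * h₀ ^ (-(k x))) * (h₀ ^ (k x) * (y * h₀ ^ (-(k y))) * h₀ ^ (-(k x)))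
      rw [hkadd x y, neg_add, zpow_add]
      group
    have hz_mul' : ∀ x y : Γ, z (x * y) = z x * ⟨h₀ ^ (k x) * (z y : Γ) * h₀ ^ (-(k x)), hconjC (k x) (z y)⟩ := by
      intro x y
      apply Subtype.ext
      rw [Subgroup.coe_mul]
      exact hz_mul x y
    -- injectivity helper
    have hinj_of : ∀ (θ : Γ →* MK),
        (∀ x : Γ, (θ x).left = ofAdd (j x)) → (∀ x : Γ, ∃ m : ℤ, m ≠ 0 ∧ (θ x).right = ofAdd (m * k x)) →
        Function.Injective θ := by
      intro θ hleft hright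
      rw [injective_iff_map_eq_one]
      intro x hx
      obtain ⟨m, hm0, hmr⟩ := hright x
      have h1 : (θ x).right = 1 := by rw [hx]; rfl
      have h2 : (θ x).left = 1 := by rw [hx]; rfl
      rw [hmr] at h1
      have hkx : k x = 0 := by
        have := congrArg toAdd h1
        simp only [toAdd_ofAdd] at this
        have h3 : m * k x = 0 := by simpa using this
        exact (mul_eq_zero.mp h3).resolve_left hm0
      have hjx : j x = 0 := by
        rw [hleft x] at h2
        have := congrArg toAdd h2
        simpa using this
      have hzx : (z x : Γ) = x := by
        show x * h₀ ^ (-(k x)) = x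
        rw [hkx]
        simp
      have h4 : χ (z x) = 1 := MZ_eq_one hjx
      have h5 : z x = 1 := by
        apply χ.injective
        rw [h4, map_one]
      rw [← hzx]
      exact congrArg Subtype.val h5
    rcases he_unit with he1 | hem1
    · -- e = 1 : abelian case
      have hfix : ∀ c : ↥r.ker, cA c = c := by
        intro c
        apply χ.injective
        rw [hτ c, he1, mul_one]
        simp
      have hcomm : ∀ c : ↥r.ker, Commute h₀ (c : Γ) := by
        intro c
        have h1 : h₀ * (c : Γ) * h₀⁻¹ = (c : Γ) := by
          rw [← hcA_apply c, hfix c]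
        exact mul_inv_eq_iff_eq_mul.mp h1
      have hconjs : ∀ (s : ℤ) (c : ↥r.ker), h₀ ^ s * (c : Γ) * h₀ ^ (-s) = (c : Γ) := by
        intro s c
        have h1 := ((hcomm c).zpow_left s).eq
        rw [h1, mul_assoc, ← zpow_add, add_neg_cancel, zpow_zero, mul_one]
      have hjmul : ∀ x y : Γ, j (x * y) = j x + j y := by
        intro x y
        have h1 : z (x * y) = z x * z y := by
          rw [hz_mul' x y]
          congr 1
          apply Subtype.ext
          exact hconjs (k x) (z y)
        show toAdd (χ (z (x * y))) = toAdd (χ (z x)) + toAdd (χ (z y))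
        rw [h1, map_mul, toAdd_mul]
      refine ⟨{
        toFun := fun x => ⟨ofAdd (j x), ofAdd (2 * k x)⟩
        map_one' := by
          apply SemidirectProduct.ext
          · show ofAdd (j 1) = 1
            rw [hj1]; rfl
          · show ofAdd (2 * k 1) = 1
            rw [hk1]; rfl
        map_mul' := fun x y => by
          apply SemidirectProduct.ext
          · show ofAdd (j (x * y)) = ofAdd (j x) * φK (ofAdd (2 * k x)) (ofAdd (j y))
            rw [φK_apply, negA_zpow_even ⟨k x, by ring⟩, hjmul x y]
            simp [ofAdd_add]
          · show ofAdd (2 * k (x * y)) = ofAdd (2 * k x) * ofAdd (2 * k y)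
            rw [hkadd x y, ← ofAdd_add]
            congr 1
            ring }, ?_⟩
      apply hinj_of
      · intro x; rfl
      · intro x; exact ⟨2, by norm_num, rfl⟩
    · -- e = -1 : Klein case
      have hflip : ∀ c : ↥r.ker, χ (cA c) = (χ c)⁻¹ := by
        intro c
        rw [hτ c, hem1]
        apply toAdd.injective
        simp
      have hsq : ∀ c : ↥r.ker, cA (cA c) = c := by
        intro c
        apply χ.injective
        rw [hflip, hflip, inv_inv]
      have hc2 : ∀ c : ↥r.ker, Commute (h₀ * h₀) (c : Γ) := by
        intro c
        have h1 : (h₀ * h₀) * (c : Γ) * (h₀ * h₀)⁻¹ = (c : Γ) := by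
          have h2 : (h₀ * h₀) * (c : Γ) * (h₀ * h₀)⁻¹ = h₀ * (h₀ * (c : Γ) * h₀⁻¹) * h₀⁻¹ := by
            group
          rw [h2, ← hcA_apply c, ← hcA_apply (cA c), hsq c]
        exact mul_inv_eq_iff_eq_mul.mp h1
      have hconj_even : ∀ (t : ℤ) (c : ↥r.ker), h₀ ^ (2 * t) * (c : Γ) * h₀ ^ (-(2 * t)) = (c : Γ) := by
        intro t c
        have h1 : h₀ ^ (2 * t) = (h₀ * h₀) ^ t := by
          rw [zpow_mul, show (2:ℤ) = ((2:ℕ):ℤ) by norm_num, zpow_natCast, pow_two]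
        have h1' : h₀ ^ (-(2 * t)) = ((h₀ * h₀) ^ t)⁻¹ := by
          rw [zpow_neg, h1]
        rw [h1, h1', ((hc2 c).zpow_left t).eq, mul_assoc, mul_inv_cancel, mul_one]
      have hconj_odd : ∀ (t : ℤ) (c : ↥r.ker),
          h₀ ^ (2 * t + 1) * (c : Γ) * h₀ ^ (-(2 * t + 1)) = ((cA c : Γ)) := by
        intro t c
        have h1 : h₀ ^ (2*t+1) * (c : Γ) * h₀ ^ (-(2*t+1))
            = h₀ ^ (2*t) * (h₀ * (c:Γ) * h₀⁻¹) * h₀ ^ (-(2*t)) := by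
          rw [zpow_add, zpow_one, neg_add, zpow_add]
          group
        rw [h1, ← hcA_apply c]
        exact hconj_even t (cA c)
      have hjmul : ∀ x y : Γ, j (x * y) = j x + (if Even (k x) then j y else -(j y)) := by
        intro x y
        rcases Int.even_or_odd (k x) with hev | hod
        · obtain ⟨t, ht⟩ := hev
          have h1 : z (x * y) = z x * z y := by
            rw [hz_mul' x y]
            congr 1
            apply Subtype.ext
            show h₀ ^ (k x) * (z y : Γ) * h₀ ^ (-(k x)) = (z y : Γ)
            rw [ht, show t + t = 2 * t by ring]
            exact hconj_even t (z y)
          rw [if_pos ⟨t, ht⟩]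
          show toAdd (χ (z (x * y))) = toAdd (χ (z x)) + toAdd (χ (z y))
          rw [h1, map_mul, toAdd_mul]
        · obtain ⟨t, ht⟩ := hod
          have h1 : z (x * y) = z x * cA (z y) := by
            rw [hz_mul' x y]
            congr 1
            apply Subtype.ext
            show h₀ ^ (k x) * (z y : Γ) * h₀ ^ (-(k x)) = (cA (z y) : Γ)
            rw [ht]
            exact hconj_odd t (z y)
          rw [if_neg (by rw [Int.not_even_iff_odd]; exact ⟨t, ht⟩)]
          show toAdd (χ (z (x * y))) = toAdd (χ (z x)) + -(toAdd (χ (z y)))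
          rw [h1, map_mul, toAdd_mul, hflip (z y), toAdd_inv]
      refine ⟨{
        toFun := fun x => ⟨ofAdd (j x), ofAdd (k x)⟩
        map_one' := by
          apply SemidirectProduct.ext
          · show ofAdd (j 1) = 1
            rw [hj1]; rfl
          · show ofAdd (k 1) = 1
            rw [hk1]; rfl
        map_mul' := fun x y => by
          apply SemidirectProduct.ext
          · show ofAdd (j (x * y)) = ofAdd (j x) * φK (ofAdd (k x)) (ofAdd (j y))
            rw [φK_apply]
            rcases Int.even_or_odd (k x) with hev | hod
            · rw [negA_zpow_even hev, hjmul x y, if_pos hev]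
              apply toAdd.injective
              simp
            · rw [negA_zpow_odd hod, hjmul x y,
                if_neg (Int.not_even_iff_odd.mpr hod), negA_apply]
              apply toAdd.injective
              simp
          · show ofAdd (k (x * y)) = ofAdd (k x) * ofAdd (k y)
            rw [hkadd x y, ofAdd_add] }, ?_⟩
      apply hinj_of
      · intro x; rfl
      · intro x
        refine ⟨1, one_ne_zero, ?_⟩
        rw [one_mul]
        rfl




end DKProof

open DKProof in
/-- Every subgroup of `D_{2n}` not containing a non-abelian free subgroup is isomorphic
to a subgroup of the Klein bottle group `K = ⟨x, y ∣ x² = y²⟩`. -/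
theorem subgroup_dihedralArtin_no_free_embeds_klein (n : ℕ) (hn : 2 ≤ n)
    (H : Subgroup (DihedralArtin n))
    (hfree : ¬ ∃ f : FreeGroup Bool →* H, Function.Injective f) :
    ∃ L : Subgroup KleinBottleGroup, Nonempty (H ≃* L) := by
  haveI : NeZero n := ⟨by omega⟩
  classical
  set ι : ↥H →* Gn n := (ΦD n).comp H.subtype with hιdef
  have hι_inj : Function.Injective ι := (ΦD_injective n).comp Subtype.val_injective
  set r : ↥H →* MZ := SemidirectProduct.rightHom.comp ι with hrdef
  have hright : ∀ c : ↥r.ker, (ι (c : ↥H)).right = 1 := by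
    intro c
    have h1 : r (c : ↥H) = 1 := c.2
    exact h1
  let lam : ↥r.ker →* Fn n :=
    { toFun := fun c => (ι (c : ↥H)).left
      map_one' := by simp
      map_mul' := fun c c' => by
        show (ι ((c : ↥H) * (c' : ↥H))).left = (ι (c : ↥H)).left * (ι (c' : ↥H)).left
        rw [map_mul, SemidirectProduct.mul_left, hright c, map_one]
        rfl }
  have hlam_inj : Function.Injective lam := by
    intro c c' hcc
    apply Subtype.ext
    apply hι_inj
    apply SemidirectProduct.ext
    · exact hcc
    · rw [hright c, hright c']
  obtain ⟨θ, hθ⟩ := embed_MK r lam hlam_inj hfree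
  refine ⟨(MtoK.comp θ).range, ⟨MonoidHom.ofInjective ?_⟩⟩
  exact MtoK_injective.comp hθ
end

section
/- Let $A$ be a finitely generated free abelian group and $L, R \leq A$ be direct factors of $A$ such that $L \cap R$ and $\langle L, R \rangle = L + R$ are also direct factors of $A$. Then there exists a basis of $A$ of the form $\mu_1, \dots, \mu_m, \lambda_1, \dots, \lambda_l, \rho_1, \dots, \rho_r, \delta_1, \dots, \delta_d$ such that $L \cap R = \langle \mu_1, \dots, \mu_m \rangle$, $L = \langle \mu_1, \dots, \mu_m, \lambda_1, \dots, \lambda_l \rangle$ and $R = \langle \mu_1, \dots, \mu_m, \rho_1, \dots, \rho_r \rangle$. -/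
section AuxAdaptedBasis

variable {A : Type*} [AddCommGroup A]

private theorem aux_span_basis_coe (S : Submodule ℤ A) (n : ℕ) (bS : Module.Basis (Fin n) ℤ S) :
    Submodule.span ℤ (Set.range fun i => (bS i : A)) = S := by
  have h : (Set.range fun i => (bS i : A)) = S.subtype '' Set.range ⇑bS := by
    rw [← Set.range_comp]; rfl
  rw [h, ← Submodule.map_span, bS.span_eq, Submodule.map_top, Submodule.range_subtype]

private theorem aux_li_basis_coe (S : Submodule ℤ A) (n : ℕ) (bS : Module.Basis (Fin n) ℤ S) :
    LinearIndependent ℤ (fun i => (bS i : A)) :=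
  bS.linearIndependent.map' S.subtype (Submodule.ker_subtype S)

end AuxAdaptedBasis

/-- Let `A` be a finitely generated free abelian group and `L, R ≤ A` direct factors
such that `L ⊓ R` and `L + R` are also direct factors. Then `A` has a basis
`μ₁,…,μ_m, λ₁,…,λ_l, ρ₁,…,ρ_r, δ₁,…,δ_d` with `L ⊓ R = ⟨μ⟩`, `L = ⟨μ, λ⟩` and
`R = ⟨μ, ρ⟩`. -/
theorem adapted_basis_of_direct_factors
    {A : Type*} [AddCommGroup A] [Module ℤ A] [Module.Free ℤ A] [Module.Finite ℤ A]
    (L R : Submodule ℤ A)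
    (hL : ∃ C, IsCompl L C) (hR : ∃ C, IsCompl R C)
    (hLR : ∃ C, IsCompl (L ⊓ R) C) (hsup : ∃ C, IsCompl (L ⊔ R) C) :
    ∃ (m l r d : ℕ) (b : Module.Basis ((Fin m ⊕ Fin l) ⊕ (Fin r ⊕ Fin d)) ℤ A),
      L ⊓ R = Submodule.span ℤ (Set.range fun i : Fin m => b (Sum.inl (Sum.inl i))) ∧
      L = Submodule.span ℤ
          ((Set.range fun i : Fin m => b (Sum.inl (Sum.inl i))) ∪
            (Set.range fun i : Fin l => b (Sum.inl (Sum.inr i)))) ∧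
      R = Submodule.span ℤ
          ((Set.range fun i : Fin m => b (Sum.inl (Sum.inl i))) ∪
            (Set.range fun i : Fin r => b (Sum.inr (Sum.inl i)))) := by
  classical
  rename_i iAG iM iFree iFin
  have hinst : iM = AddCommGroup.toIntModule A :=
    @Subsingleton.elim _ (@Unique.instSubsingleton _ AddCommGroup.uniqueIntModule) _ _
  subst hinst
  obtain ⟨C, hC⟩ := hLR
  obtain ⟨D, hD⟩ := hsup
  set M : Submodule ℤ A := L ⊓ R with hMdefEq
  have hML : M ≤ L := inf_le_left
  have hMR : M ≤ R := inf_le_right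
  set Λ : Submodule ℤ A := C ⊓ L with hΛdef
  set P : Submodule ℤ A := C ⊓ R with hPdef
  -- modular law decompositions
  have hLdec : M ⊔ Λ = L := by
    have h := sup_inf_assoc_of_le (x := M) C hML
    rw [hC.sup_eq_top, top_inf_eq] at h
    rw [hΛdef]; exact h.symm
  have hRdec : M ⊔ P = R := by
    have h := sup_inf_assoc_of_le (x := M) C hMR
    rw [hC.sup_eq_top, top_inf_eq] at h
    rw [hPdef]; exact h.symm
  have hdisjMΛ : Disjoint M Λ := hC.disjoint.mono_right inf_le_left
  have hdisjMP : Disjoint M P := hC.disjoint.mono_right inf_le_left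
  -- L ⊔ P = L ⊔ R
  have hLP : L ⊔ P = L ⊔ R := by
    apply le_antisymm
    · exact sup_le le_sup_left (le_trans inf_le_right le_sup_right)
    · refine sup_le le_sup_left ?_
      rw [← hRdec]
      exact sup_le (hML.trans le_sup_left) le_sup_right
  -- Disjoint L P
  have hdisjLP : Disjoint L P := by
    have h : L ⊓ P ≤ M ⊓ C := by
      refine le_inf (le_inf inf_le_left (inf_le_right.trans inf_le_right)) ?_
      exact inf_le_right.trans inf_le_left
    rw [disjoint_iff]
    exact le_antisymm (h.trans (disjoint_iff.mp hC.disjoint).le) bot_le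
  -- Disjoint L (P ⊔ D)
  have hdisjL_PD : Disjoint L (P ⊔ D) := by
    have h1 : (P ⊔ D) ⊓ (L ⊔ R) = P := by
      rw [sup_inf_assoc_of_le D (show P ≤ L ⊔ R by rw [← hLP]; exact le_sup_right)]
      rw [inf_comm D (L ⊔ R), disjoint_iff.mp hD.disjoint, sup_bot_eq]
    have h2 : L ⊓ (P ⊔ D) ≤ P := by
      calc L ⊓ (P ⊔ D) ≤ (L ⊔ R) ⊓ (P ⊔ D) := inf_le_inf_right _ le_sup_left
        _ = P := by rw [inf_comm]; exact h1
    have h3 : L ⊓ (P ⊔ D) ≤ L ⊓ P := le_inf inf_le_left h2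
    rw [disjoint_iff] at hdisjLP ⊢
    exact le_antisymm (h3.trans hdisjLP.le) bot_le
  have hdisjPD : Disjoint P D :=
    hD.disjoint.mono_left (by rw [← hLP]; exact le_sup_right)
  -- total spanning
  have htotal : (M ⊔ Λ) ⊔ (P ⊔ D) = ⊤ := by
    rw [hLdec, ← sup_assoc, hLP, hD.sup_eq_top]
  -- bases of the pieces
  obtain ⟨bb⟩ := Module.Free.exists_basis (R := ℤ) (M := A)
  obtain ⟨ι, b0⟩ := bb
  have : Finite ι := Module.Finite.finite_basis b0
  obtain ⟨m, bM⟩ := Submodule.basisOfPid b0 M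
  obtain ⟨l, bΛ⟩ := Submodule.basisOfPid b0 Λ
  obtain ⟨r, bP⟩ := Submodule.basisOfPid b0 P
  obtain ⟨d, bD⟩ := Submodule.basisOfPid b0 D
  have spanM := aux_span_basis_coe M m bM
  have spanΛ := aux_span_basis_coe Λ l bΛ
  have spanP := aux_span_basis_coe P r bP
  have spanD := aux_span_basis_coe D d bD
  -- linear independence of the combined family
  have li1 : LinearIndependent ℤ
      (Sum.elim (fun i => (bM i : A)) (fun i => (bΛ i : A))) := by
    refine (aux_li_basis_coe M m bM).sum_type (aux_li_basis_coe Λ l bΛ) ?_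
    rw [spanM, spanΛ]; exact hdisjMΛ
  have li2 : LinearIndependent ℤ
      (Sum.elim (fun i => (bP i : A)) (fun i => (bD i : A))) := by
    refine (aux_li_basis_coe P r bP).sum_type (aux_li_basis_coe D d bD) ?_
    rw [spanP, spanD]; exact hdisjPD
  have li : LinearIndependent ℤ
      (Sum.elim (Sum.elim (fun i => (bM i : A)) (fun i => (bΛ i : A)))
        (Sum.elim (fun i => (bP i : A)) (fun i => (bD i : A)))) := by
    refine li1.sum_type li2 ?_
    rw [Set.Sum.elim_range, Set.Sum.elim_range, Submodule.span_union, Submodule.span_union,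
      spanM, spanΛ, spanP, spanD, hLdec]
    exact hdisjL_PD
  have hspan : ⊤ ≤ Submodule.span ℤ
      (Set.range (Sum.elim (Sum.elim (fun i => (bM i : A)) (fun i => (bΛ i : A)))
        (Sum.elim (fun i => (bP i : A)) (fun i => (bD i : A))))) := by
    rw [Set.Sum.elim_range, Set.Sum.elim_range, Set.Sum.elim_range, Submodule.span_union,
      Submodule.span_union, Submodule.span_union, spanM, spanΛ, spanP, spanD, htotal]
  refine ⟨m, l, r, d, Module.Basis.mk li hspan, ?_, ?_, ?_⟩
  · simp only [Module.Basis.mk_apply, Sum.elim_inl, Sum.elim_inr]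
    exact spanM.symm
  · simp only [Module.Basis.mk_apply, Sum.elim_inl, Sum.elim_inr]
    rw [Submodule.span_union, spanM, spanΛ, hLdec]
  · simp only [Module.Basis.mk_apply, Sum.elim_inl, Sum.elim_inr]
    rw [Submodule.span_union, spanM, spanP, hRdec]
end
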